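/- arXiv:1705.07853 — 3 statements merged into one kernel-verified Lean document; each statement's English description precedes it below -/
import Mathlib

section
/- Let M be a positive definite d×d matrix with eigenvalues λ_1 ≥ ... ≥ λ_d > 0 and orthonormal eigenvectors u_1,...,u_d, and let X be a convex subset of ℝ^d (e.g. the unit Euclidean ball). If f : X → ℝ is differentiable everywhere on X, then for all x, x' ∈ X one has |f(x) − f(x')| ≤ ‖x − x'‖_M · √( Σ_{i=1}^d ‖∇_{u_i} f‖_∞² / λ_i ), where ‖∇_{u_i} f‖_∞ = sup_{z ∈ X} ∇f(z)^⊤ u_i and ‖x − x'‖_M = √((x−x')^⊤ M (x−x')). -/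
open Matrix Finset

/-- The Mahalanobis norm `‖v‖_M = √(vᵀ M v)` induced by a matrix `M`. -/
noncomputable def mahalanobisNorm {d : ℕ} (M : Matrix (Fin d) (Fin d) ℝ) (v : Fin d → ℝ) : ℝ :=
  Real.sqrt (v ⬝ᵥ M.mulVec v)

lemma sum_icc_fin' (d : ℕ) (hd : 0 < d) (F : ℕ → ℝ) :
    ∑ i ∈ Finset.Icc 1 d, F i = ∑ k : Fin d, F (k.val + 1) := by
  apply Finset.sum_nbij' (fun i => if h : i ∈ Finset.Icc 1 d then (⟨i - 1, by simp at h; omega⟩ : Fin d) else ⟨0, hd⟩)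
    (fun k => k.val + 1) <;> intro a ha <;> simp_all <;> omega

lemma dp_sum' {ι n : Type*} [Fintype n] (s : Finset ι) (w : n → ℝ) (f : ι → n → ℝ) :
    w ⬝ᵥ (∑ i ∈ s, f i) = ∑ i ∈ s, w ⬝ᵥ f i := by
  simp only [dotProduct, Finset.sum_apply, Finset.mul_sum]
  rw [Finset.sum_comm]

lemma sum_dp' {ι n : Type*} [Fintype n] (s : Finset ι) (f : ι → n → ℝ) (w : n → ℝ) :
    (∑ i ∈ s, f i) ⬝ᵥ w = ∑ i ∈ s, f i ⬝ᵥ w := by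
  simp only [dotProduct, Finset.sum_apply, Finset.sum_mul]
  rw [Finset.sum_comm]

lemma on_expand' (d : ℕ) (u : ℕ → (Fin d → ℝ))
    (huON : ∀ i ∈ Finset.Icc 1 d, ∀ j ∈ Finset.Icc 1 d,
      u i ⬝ᵥ u j = if i = j then (1 : ℝ) else 0)
    (v : Fin d → ℝ) : v = ∑ k : Fin d, (u (k.val+1) ⬝ᵥ v) • u (k.val+1) := by
  set U : Matrix (Fin d) (Fin d) ℝ := fun k l => u (k.val+1) l with hU
  have hUUT : U * Uᵀ = 1 := by
    ext k l
    have := huON (k.val+1) (by simp [Nat.succ_le_iff, k.isLt]) (l.val+1) (by simp [Nat.succ_le_iff, l.isLt])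
    rw [Matrix.mul_apply]
    simp only [Matrix.transpose_apply]
    simp only [Matrix.one_apply, Matrix.transpose_apply, hU]
    rw [show (∑ j, u (k.val+1) j * u (l.val+1) j) = u (k.val+1) ⬝ᵥ u (l.val+1) from rfl, this]
    simp [Fin.ext_iff]
  have key : Uᵀ *ᵥ (U *ᵥ v) = v := by
    rw [Matrix.mulVec_mulVec, mul_eq_one_comm.mp hUUT, Matrix.one_mulVec]
  ext l
  conv_lhs => rw [← key]
  simp only [Matrix.mulVec, Matrix.transpose_apply, dotProduct, Finset.sum_apply,
    Pi.smul_apply, smul_eq_mul, hU]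
  exact Finset.sum_congr rfl fun k _ => mul_comm _ _

lemma quadform_eq' (d : ℕ) (M : Matrix (Fin d) (Fin d) ℝ) (lam : ℕ → ℝ) (u : ℕ → (Fin d → ℝ))
    (huON : ∀ i ∈ Finset.Icc 1 d, ∀ j ∈ Finset.Icc 1 d,
      u i ⬝ᵥ u j = if i = j then (1 : ℝ) else 0)
    (heig : ∀ i ∈ Finset.Icc 1 d, M.mulVec (u i) = lam i • u i)
    (v : Fin d → ℝ)
    (hv : v = ∑ k : Fin d, (u (k.val+1) ⬝ᵥ v) • u (k.val+1)) :
    v ⬝ᵥ M *ᵥ v = ∑ k : Fin d, lam (k.val+1) * (u (k.val+1) ⬝ᵥ v)^2 := by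
  set c : Fin d → ℝ := fun k => u (k.val+1) ⬝ᵥ v with hc
  have hmem : ∀ k : Fin d, k.val + 1 ∈ Finset.Icc 1 d := fun k => by
    simp [Nat.succ_le_iff, k.isLt]
  have hMv : M *ᵥ v = ∑ k : Fin d, (c k * lam (k.val+1)) • u (k.val+1) := by
    conv_lhs => rw [hv]
    rw [show M *ᵥ (∑ k : Fin d, c k • u (k.val+1))
        = M.mulVecLin (∑ k : Fin d, c k • u (k.val+1)) from rfl, map_sum]
    refine Finset.sum_congr rfl fun k _ => ?_
    rw [LinearMap.map_smul, Matrix.mulVecLin_apply, heig _ (hmem k), smul_smul, mul_comm]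
  conv_lhs => rw [hMv, hv]
  rw [sum_dp']
  refine Finset.sum_congr rfl fun k _ => ?_
  rw [dp_sum', Finset.sum_eq_single k]
  · rw [smul_dotProduct, dotProduct_smul, huON _ (hmem k) _ (hmem k)]
    simp [hc]; ring
  · intro j _ hjk
    rw [smul_dotProduct, dotProduct_smul, huON _ (hmem k) _ (hmem j)]
    have : ¬ (k.val + 1 = j.val + 1) := by simp [Fin.ext_iff] at hjk ⊢; omega
    simp [this]
    intro h; omega
  · simp

/-- Bounded derivatives imply Lipschitzness in the `M`-metric.
Let `M` be positive definite with eigenvalues `λ_1 ≥ ... ≥ λ_d > 0` and orthonormal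
eigenvectors `u_1, ..., u_d`, and let `X ⊆ ℝ^d` be convex.  If `f : X → ℝ` is
differentiable everywhere on `X`, then for all `x, x' ∈ X`,
`|f(x) − f(x')| ≤ ‖x − x'‖_M √(Σ_{i=1}^d ‖∇_{u_i} f‖_∞² / λ_i)`,
where `L i = ‖∇_{u_i} f‖_∞` is the supremum over `z ∈ X` of the (absolute) directional
derivative of `f` at `z` in direction `u_i` (the supremum over unit vectors in the span
of `u_i`, as in the paper's definition of `‖∇_V f‖_∞`). -/
theorem lipschitz_in_M_metric_of_bounded_directional_derivatives
    (d : ℕ) (hd : 0 < d)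
    (M : Matrix (Fin d) (Fin d) ℝ) (hM : M.PosDef)
    (lam : ℕ → ℝ) (u : ℕ → (Fin d → ℝ))
    (huON : ∀ i ∈ Finset.Icc 1 d, ∀ j ∈ Finset.Icc 1 d,
      u i ⬝ᵥ u j = if i = j then (1 : ℝ) else 0)
    (heig : ∀ i ∈ Finset.Icc 1 d, M.mulVec (u i) = lam i • u i)
    (hord : ∀ i ∈ Finset.Icc 1 d, ∀ j ∈ Finset.Icc 1 d, i ≤ j → lam j ≤ lam i)
    (hpos : ∀ i ∈ Finset.Icc 1 d, 0 < lam i)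
    (X : Set (Fin d → ℝ)) (hX : Convex ℝ X)
    (f : (Fin d → ℝ) → ℝ) (hf : DifferentiableOn ℝ f X)
    (L : ℕ → ℝ)
    (hL : ∀ i ∈ Finset.Icc 1 d,
      IsLUB {r : ℝ | ∃ z ∈ X, r = |fderivWithin ℝ f X z (u i)|} (L i))
    (x x' : Fin d → ℝ) (hx : x ∈ X) (hx' : x' ∈ X) :
    |f x - f x'| ≤
      mahalanobisNorm M (x - x') *
        Real.sqrt (∑ i ∈ Finset.Icc 1 d, (L i) ^ 2 / lam i) := by
  set v : Fin d → ℝ := x - x' with hvdef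
  set c : Fin d → ℝ := fun k => u (k.val+1) ⬝ᵥ v with hc
  have hmem : ∀ k : Fin d, k.val + 1 ∈ Finset.Icc 1 d := fun k => by
    simp [Nat.succ_le_iff, k.isLt]
  have hv : v = ∑ k : Fin d, c k • u (k.val+1) := on_expand' d u huON v
  -- directional derivative bound
  have hLb : ∀ k : Fin d, ∀ z ∈ X, |fderivWithin ℝ f X z (u (k.val+1))| ≤ L (k.val+1) :=
    fun k z hz => (hL _ (hmem k)).1 ⟨z, hz, rfl⟩
  have hLpos : ∀ k : Fin d, 0 ≤ L (k.val+1) :=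
    fun k => le_trans (abs_nonneg _) (hLb k x hx)
  set C : ℝ := ∑ k : Fin d, |c k| * L (k.val+1) with hC
  -- Step 1: MVT, |f x - f x'| ≤ C
  have step1 : |f x - f x'| ≤ C := by
    set φ : ℝ → (Fin d → ℝ) := fun t => x' + t • v with hφ
    have hseg : Set.MapsTo φ (Set.Icc (0:ℝ) 1) X := by
      intro t ht
      have := hX.add_smul_sub_mem hx' hx ht
      simpa [hφ, hvdef] using this
    have hderiv : ∀ t ∈ Set.Icc (0:ℝ) 1,
        HasDerivWithinAt (f ∘ φ) (fderivWithin ℝ f X (φ t) v) (Set.Icc (0:ℝ) 1) t := by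
      intro t ht
      have hφd : HasDerivWithinAt φ v (Set.Icc (0:ℝ) 1) t := by
        have : HasDerivAt (fun s : ℝ => x' + s • v) ((1:ℝ) • v) t :=
          ((hasDerivAt_id t).smul_const v).const_add x'
        rw [one_smul] at this
        exact this.hasDerivWithinAt
      exact ((hf _ (hseg ht)).hasFDerivWithinAt).comp_hasDerivWithinAt t hφd hseg
    have hbound : ∀ t ∈ Set.Icc (0:ℝ) 1, ‖fderivWithin ℝ f X (φ t) v‖ ≤ C := by
      intro t ht
      have hz : φ t ∈ X := hseg ht
      set D := fderivWithin ℝ f X (φ t) with hD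
      have hDv : D v = ∑ k : Fin d, c k * D (u (k.val+1)) := by
        conv_lhs => rw [hv]
        rw [map_sum]
        exact Finset.sum_congr rfl fun k _ => by rw [ContinuousLinearMap.map_smul]; rfl
      rw [Real.norm_eq_abs, hDv]
      calc |∑ k : Fin d, c k * D (u (k.val+1))|
          ≤ ∑ k : Fin d, |c k * D (u (k.val+1))| := Finset.abs_sum_le_sum_abs _ _
        _ ≤ C := by
            rw [hC]
            refine Finset.sum_le_sum fun k _ => ?_
            rw [abs_mul]
            exact mul_le_mul_of_nonneg_left (hLb k _ hz) (abs_nonneg _)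
    have := (convex_Icc (0:ℝ) 1).norm_image_sub_le_of_norm_hasDerivWithin_le hderiv hbound
      (Set.mem_Icc.mpr ⟨le_refl 0, zero_le_one⟩) (Set.mem_Icc.mpr ⟨zero_le_one, le_refl 1⟩)
    have h1 : φ 1 = x := by simp [hφ, hvdef]
    have h0 : φ 0 = x' := by simp [hφ]
    simpa [Function.comp, h1, h0] using this
  -- Step 2: Cauchy–Schwarz : C ≤ √(∑ λ c²) * √(∑ L²/λ)
  set A : ℝ := ∑ k : Fin d, lam (k.val+1) * (c k)^2 with hA
  set B : ℝ := ∑ k : Fin d, (L (k.val+1))^2 / lam (k.val+1) with hB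
  have hlampos : ∀ k : Fin d, 0 < lam (k.val+1) := fun k => hpos _ (hmem k)
  have hAnn : 0 ≤ A := Finset.sum_nonneg fun k _ =>
    mul_nonneg (hlampos k).le (sq_nonneg _)
  have hBnn : 0 ≤ B := Finset.sum_nonneg fun k _ =>
    div_nonneg (sq_nonneg _) (hlampos k).le
  have hCnn : 0 ≤ C := Finset.sum_nonneg fun k _ =>
    mul_nonneg (abs_nonneg _) (hLpos k)
  have step2 : C ≤ Real.sqrt A * Real.sqrt B := by
    rw [← Real.sqrt_mul hAnn]
    rw [show C = ∑ k : Fin d,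
        (Real.sqrt (lam (k.val+1)) * |c k|) * (L (k.val+1) / Real.sqrt (lam (k.val+1))) from
      Finset.sum_congr rfl fun k _ => by
        field_simp [Real.sqrt_ne_zero'.mpr (hlampos k)]]
    have hcs := Finset.sum_mul_sq_le_sq_mul_sq Finset.univ
      (fun k : Fin d => Real.sqrt (lam (k.val+1)) * |c k|)
      (fun k : Fin d => L (k.val+1) / Real.sqrt (lam (k.val+1)))
    have hterm : (∑ k : Fin d, (Real.sqrt (lam (k.val+1)) * |c k|)^2)
        * (∑ k : Fin d, (L (k.val+1) / Real.sqrt (lam (k.val+1)))^2) = A * B := by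
      congr 1
      · exact Finset.sum_congr rfl fun k _ => by
          rw [mul_pow, Real.sq_sqrt (hlampos k).le, sq_abs]
      · exact Finset.sum_congr rfl fun k _ => by
          rw [div_pow, Real.sq_sqrt (hlampos k).le]
    rw [hterm] at hcs
    have hsnn : 0 ≤ ∑ k : Fin d,
        (Real.sqrt (lam (k.val+1)) * |c k|) * (L (k.val+1) / Real.sqrt (lam (k.val+1))) :=
      Finset.sum_nonneg fun k _ => mul_nonneg
        (mul_nonneg (Real.sqrt_nonneg _) (abs_nonneg _))
        (div_nonneg (hLpos k) (Real.sqrt_nonneg _))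
    calc _ ≤ Real.sqrt ((∑ k : Fin d,
            (Real.sqrt (lam (k.val+1)) * |c k|) * (L (k.val+1) / Real.sqrt (lam (k.val+1))))^2) := by
          rw [Real.sqrt_sq hsnn]
      _ ≤ Real.sqrt (A * B) := Real.sqrt_le_sqrt hcs
  -- Step 3: identify √A with the Mahalanobis norm and B with the Icc sum
  have hquad : v ⬝ᵥ M *ᵥ v = A := quadform_eq' d M lam u huON heig v hv
  have hmaha : mahalanobisNorm M (x - x') = Real.sqrt A := by
    rw [mahalanobisNorm, ← hvdef, hquad]
  have hBsum : ∑ i ∈ Finset.Icc 1 d, (L i)^2 / lam i = B := by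
    rw [hB, sum_icc_fin' d hd]
  rw [hmaha, hBsum]
  exact le_trans step1 step2
end

section
/- Let λ_1 ≥ ... ≥ λ_d > 0, let E = { x ∈ ℝ^d : Σ_{i=1}^d x_i²/λ_i ≤ 1 } be the ellipsoid with semi-axes √λ_i along an orthonormal basis u_1,...,u_d, fix ε > 0, let s ∈ {1,...,d−1} satisfy λ_{s+1} ≤ ε², and let Ẽ = { x ∈ E : x_i = 0 for i = s+1,...,d } be the truncated ellipsoid. If S̃ ⊆ Ẽ is an ε-cover of Ẽ in the Euclidean norm, then S̃ is a (√2 ε)-cover of E in the Euclidean norm: for every x ∈ E there exists x̃ ∈ S̃ with ‖x − x̃‖_2 ≤ √2 ε. -/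
open Matrix Finset

lemma sum_Icc_one {M : Type*} [AddCommMonoid M] (d : ℕ) (f : ℕ → M) :
    ∑ i ∈ Finset.Icc 1 d, f i = ∑ k : Fin d, f ((k : ℕ) + 1) := by
  have h : Finset.Icc 1 d = Finset.image (· + 1) (Finset.range d) := by
    ext i
    simp only [Finset.mem_Icc, Finset.mem_image, Finset.mem_range]
    constructor
    · rintro ⟨h1, h2⟩; exact ⟨i - 1, by omega, by omega⟩
    · rintro ⟨a, ha, rfl⟩; omega
  rw [h, Finset.sum_image (by intro a _ b _ h; exact Nat.succ_injective h), ← Fin.sum_univ_eq_sum_range]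

lemma ortho_complete (d : ℕ) (u : ℕ → (Fin d → ℝ))
    (huON : ∀ i ∈ Finset.Icc 1 d, ∀ j ∈ Finset.Icc 1 d,
      u i ⬝ᵥ u j = if i = j then (1 : ℝ) else 0)
    (x : Fin d → ℝ) : ∑ i ∈ Finset.Icc 1 d, (x ⬝ᵥ u i) • u i = x := by
  classical
  set G : Matrix (Fin d) (Fin d) ℝ := Matrix.of (fun k j => u ((k : ℕ) + 1) j) with hG
  have hmem : ∀ i : Fin d, (i : ℕ) + 1 ∈ Finset.Icc 1 d := by
    intro i
    simp only [Finset.mem_Icc]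
    exact ⟨Nat.le_add_left 1 _, Nat.succ_le_of_lt i.isLt⟩
  have hGGt : G * Gᵀ = 1 := by
    ext i j
    have h := huON _ (hmem i) _ (hmem j)
    have he : (G * Gᵀ) i j = u ((i : ℕ)+1) ⬝ᵥ u ((j : ℕ)+1) := by
      simp [Matrix.mul_apply, dotProduct, hG]
    rw [he, h, Matrix.one_apply]
    by_cases hij : i = j
    · simp [hij]
    · have hne : (i : ℕ) + 1 ≠ (j : ℕ) + 1 :=
        fun h' => hij (Fin.val_injective (Nat.succ_injective h'))
      simp [hij, hne, Fin.val_inj]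
  have hGtG : Gᵀ * G = 1 := mul_eq_one_comm.mp hGGt
  have hx : Gᵀ *ᵥ (G *ᵥ x) = x := by
    rw [Matrix.mulVec_mulVec, hGtG, Matrix.one_mulVec]
  funext j
  have h1 : (∑ i ∈ Finset.Icc 1 d, (x ⬝ᵥ u i) • u i) j
      = ∑ i ∈ Finset.Icc 1 d, (x ⬝ᵥ u i) * u i j := by
    simp
  rw [h1, sum_Icc_one]
  conv_rhs => rw [← hx]
  simp [Matrix.mulVec, dotProduct, hG, Finset.mul_sum, mul_comm, mul_left_comm]

lemma sum_smul_dot (d : ℕ) (u : ℕ → (Fin d → ℝ)) (T : Finset ℕ) (c : ℕ → ℝ)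
    (v : Fin d → ℝ) :
    (∑ i ∈ T, c i • u i) ⬝ᵥ v = ∑ i ∈ T, c i * (u i ⬝ᵥ v) := by
  simp only [dotProduct, Finset.sum_apply, Pi.smul_apply, smul_eq_mul,
    Finset.sum_mul, Finset.mul_sum]
  rw [Finset.sum_comm]
  exact Finset.sum_congr rfl fun i _ => Finset.sum_congr rfl fun k _ => by ring

lemma dot_sum_sum (d : ℕ) (u : ℕ → (Fin d → ℝ))
    (huON : ∀ i ∈ Finset.Icc 1 d, ∀ j ∈ Finset.Icc 1 d,
      u i ⬝ᵥ u j = if i = j then (1 : ℝ) else 0)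
    (T T' : Finset ℕ) (hT : T ⊆ Finset.Icc 1 d) (hT' : T' ⊆ Finset.Icc 1 d)
    (c c' : ℕ → ℝ) :
    (∑ i ∈ T, c i • u i) ⬝ᵥ (∑ j ∈ T', c' j • u j) = ∑ i ∈ T ∩ T', c i * c' i := by
  classical
  rw [sum_smul_dot]
  have h1 : ∀ i ∈ T, c i * (u i ⬝ᵥ ∑ j ∈ T', c' j • u j)
      = if i ∈ T' then c i * c' i else 0 := by
    intro i hi
    rw [dotProduct_comm, sum_smul_dot]
    have h2 : ∀ j ∈ T', c' j * (u j ⬝ᵥ u i) = if j = i then c' j else 0 := by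
      intro j hj
      rw [huON j (hT' hj) i (hT hi)]
      by_cases h : j = i <;> simp [h]
    rw [Finset.sum_congr rfl h2, Finset.sum_ite_eq' T' i c']
    by_cases h : i ∈ T' <;> simp [h, Finset.mul_sum, mul_comm]
  rw [Finset.sum_congr rfl h1, ← Finset.sum_filter, Finset.filter_mem_eq_inter]

/-- Let `λ_1 ≥ ... ≥ λ_d > 0`, let `E` be the ellipsoid with semi-axes `√λ_i` along an
orthonormal basis `u_1, ..., u_d` (coordinates `x_i = x ⬝ᵥ u_i`), fix `ε > 0`, let
`s ∈ {1,...,d−1}` satisfy `λ_{s+1} ≤ ε²`, and let `Ẽ` be the truncated ellipsoid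
(points of `E` whose coordinates `s+1, ..., d` vanish).  If `S̃ ⊆ Ẽ` is an `ε`-cover of
`Ẽ` in the Euclidean norm, then `S̃` is a `√2 ε`-cover of `E` in the Euclidean norm. -/
theorem truncated_ellipsoid_cover
    (d : ℕ) (lam : ℕ → ℝ) (u : ℕ → (Fin d → ℝ))
    (huON : ∀ i ∈ Finset.Icc 1 d, ∀ j ∈ Finset.Icc 1 d,
      u i ⬝ᵥ u j = if i = j then (1 : ℝ) else 0)
    (hord : ∀ i ∈ Finset.Icc 1 d, ∀ j ∈ Finset.Icc 1 d, i ≤ j → lam j ≤ lam i)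
    (hpos : ∀ i ∈ Finset.Icc 1 d, 0 < lam i)
    (ε : ℝ) (hε : 0 < ε)
    (s : ℕ) (hs1 : 1 ≤ s) (hsd : s ≤ d - 1) (hls : lam (s + 1) ≤ ε ^ 2)
    (E Etil : Set (Fin d → ℝ))
    (hE : E = {x | ∑ i ∈ Finset.Icc 1 d, (x ⬝ᵥ u i) ^ 2 / lam i ≤ 1})
    (hEtil : Etil = {x ∈ E | ∀ i ∈ Finset.Icc (s + 1) d, x ⬝ᵥ u i = 0})
    (Stil : Finset (Fin d → ℝ)) (hStil : ↑Stil ⊆ Etil)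
    (hcover : ∀ x ∈ Etil, ∃ y ∈ Stil, Real.sqrt ((x - y) ⬝ᵥ (x - y)) ≤ ε) :
    ∀ x ∈ E, ∃ y ∈ Stil, Real.sqrt ((x - y) ⬝ᵥ (x - y)) ≤ Real.sqrt 2 * ε := by
  classical
  intro x hx
  have hsd' : s + 1 ≤ d := by omega
  have hT1 : Finset.Icc 1 s ⊆ Finset.Icc 1 d := Finset.Icc_subset_Icc_right (by omega)
  have hT2 : Finset.Icc (s+1) d ⊆ Finset.Icc 1 d := Finset.Icc_subset_Icc (by omega) le_rfl
  have hunion : Finset.Icc 1 s ∪ Finset.Icc (s+1) d = Finset.Icc 1 d := by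
    ext i; simp only [Finset.mem_union, Finset.mem_Icc]; omega
  have hdisj : Disjoint (Finset.Icc 1 s) (Finset.Icc (s+1) d) := by
    rw [Finset.disjoint_left]
    intro i h1 h2
    simp only [Finset.mem_Icc] at h1 h2
    omega
  have hsplit : ∀ {M : Type} [AddCommMonoid M] (f : ℕ → M),
      ∑ i ∈ Finset.Icc 1 d, f i
        = ∑ i ∈ Finset.Icc 1 s, f i + ∑ i ∈ Finset.Icc (s+1) d, f i := by
    intro M _ f
    rw [← hunion, Finset.sum_union hdisj]
  set a : ℕ → ℝ := fun i => x ⬝ᵥ u i with ha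
  have hxE : ∑ i ∈ Finset.Icc 1 d, (a i) ^ 2 / lam i ≤ 1 := by
    rw [hE] at hx; exact hx
  have hterm_nonneg : ∀ i ∈ Finset.Icc 1 d, 0 ≤ (a i) ^ 2 / lam i := fun i hi =>
    div_nonneg (sq_nonneg _) (hpos i hi).le
  set xp : Fin d → ℝ := ∑ i ∈ Finset.Icc 1 s, a i • u i with hxp
  have hxpd : ∀ j ∈ Finset.Icc 1 d,
      xp ⬝ᵥ u j = if j ∈ Finset.Icc 1 s then a j else 0 := by
    intro j hj
    rw [hxp, sum_smul_dot]
    have h2 : ∀ i ∈ Finset.Icc 1 s, a i * (u i ⬝ᵥ u j) = if i = j then a i else 0 := by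
      intro i hi
      rw [huON i (hT1 hi) j hj]
      by_cases h : i = j <;> simp [h]
    rw [Finset.sum_congr rfl h2, Finset.sum_ite_eq' _ j a]
  have hxpEtil : xp ∈ Etil := by
    rw [hEtil]
    have hxpE : xp ∈ E := by
      rw [hE]
      show ∑ i ∈ Finset.Icc 1 d, (xp ⬝ᵥ u i) ^ 2 / lam i ≤ 1
      have heq : ∑ i ∈ Finset.Icc 1 d, (xp ⬝ᵥ u i) ^ 2 / lam i
          = ∑ i ∈ Finset.Icc 1 s, (a i) ^ 2 / lam i := by
        rw [hsplit (fun i => (xp ⬝ᵥ u i) ^ 2 / lam i)]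
        have e1 : ∀ i ∈ Finset.Icc 1 s, (xp ⬝ᵥ u i) ^ 2 / lam i = (a i) ^ 2 / lam i := by
          intro i hi; rw [hxpd i (hT1 hi), if_pos hi]
        have e2 : ∀ i ∈ Finset.Icc (s+1) d, (xp ⬝ᵥ u i) ^ 2 / lam i = 0 := by
          intro i hi
          have hni : i ∉ Finset.Icc 1 s := by
            simp only [Finset.mem_Icc] at hi ⊢; omega
          rw [hxpd i (hT2 hi), if_neg hni]
          simp
        rw [Finset.sum_congr rfl e1, Finset.sum_congr rfl e2]
        simp
      rw [heq]
      refine le_trans ?_ hxE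
      rw [hsplit (fun i => (a i) ^ 2 / lam i)]
      have : 0 ≤ ∑ i ∈ Finset.Icc (s+1) d, (a i) ^ 2 / lam i :=
        Finset.sum_nonneg fun i hi => hterm_nonneg i (hT2 hi)
      linarith
    refine ⟨hxpE, ?_⟩
    intro i hi
    have hni : i ∉ Finset.Icc 1 s := by
      simp only [Finset.mem_Icc] at hi ⊢; omega
    rw [hxpd i (hT2 hi), if_neg hni]
  obtain ⟨y, hyS, hydist⟩ := hcover xp hxpEtil
  refine ⟨y, hyS, ?_⟩
  have hyEtil := hStil hyS
  rw [hEtil] at hyEtil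
  obtain ⟨hyE, hy0⟩ := hyEtil
  set b : ℕ → ℝ := fun i => y ⬝ᵥ u i with hb
  have hydecomp : y = ∑ i ∈ Finset.Icc 1 s, b i • u i := by
    conv_lhs => rw [← ortho_complete d u huON y]
    rw [hsplit (fun i => b i • u i)]
    have e2 : ∀ i ∈ Finset.Icc (s+1) d, b i • u i = 0 := by
      intro i hi; rw [hb]; simp only []; rw [hy0 i hi, zero_smul]
    rw [Finset.sum_congr rfl e2]
    simp
  have hxxp : x - xp = ∑ i ∈ Finset.Icc (s+1) d, a i • u i := by
    conv_lhs => rw [← ortho_complete d u huON x]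
    rw [hsplit (fun i => a i • u i), hxp]
    abel
  have hxpy : xp - y = ∑ i ∈ Finset.Icc 1 s, (a i - b i) • u i := by
    rw [hxp]
    conv_lhs => rw [hydecomp]
    rw [← Finset.sum_sub_distrib]
    exact Finset.sum_congr rfl fun i _ => (sub_smul _ _ _).symm
  have h2 : (x - xp) ⬝ᵥ (x - xp) = ∑ i ∈ Finset.Icc (s+1) d, a i * a i := by
    rw [hxxp, dot_sum_sum d u huON _ _ hT2 hT2, Finset.inter_self]
  have hcross : (x - xp) ⬝ᵥ (xp - y) = 0 := by
    rw [hxxp, hxpy, dot_sum_sum d u huON _ _ hT2 hT1]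
    have : Finset.Icc (s+1) d ∩ Finset.Icc 1 s = ∅ := by
      ext i; simp only [Finset.mem_inter, Finset.mem_Icc, Finset.notMem_empty,
        iff_false, not_and]
      omega
    rw [this, Finset.sum_empty]
  have h3q : (xp - y) ⬝ᵥ (xp - y) = ∑ i ∈ Finset.Icc 1 s, (a i - b i) * (a i - b i) := by
    rw [hxpy, dot_sum_sum d u huON _ _ hT1 hT1, Finset.inter_self]
  have h3nonneg : 0 ≤ (xp - y) ⬝ᵥ (xp - y) := by
    rw [h3q]; exact Finset.sum_nonneg fun i _ => mul_self_nonneg _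
  have h3 : (xp - y) ⬝ᵥ (xp - y) ≤ ε ^ 2 := by
    have := Real.sq_sqrt h3nonneg
    calc (xp - y) ⬝ᵥ (xp - y) = Real.sqrt ((xp - y) ⬝ᵥ (xp - y)) ^ 2 := this.symm
      _ ≤ ε ^ 2 := pow_le_pow_left₀ (Real.sqrt_nonneg _) hydist 2
  have h2b : (x - xp) ⬝ᵥ (x - xp) ≤ ε ^ 2 := by
    rw [h2]
    have key : ∀ i ∈ Finset.Icc (s+1) d, a i * a i ≤ ε ^ 2 * ((a i) ^ 2 / lam i) := by
      intro i hi
      have hiI : i ∈ Finset.Icc 1 d := hT2 hi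
      have hlpos := hpos i hiI
      have hs1d : s + 1 ∈ Finset.Icc 1 d := by
        simp only [Finset.mem_Icc]; omega
      have hle : lam i ≤ lam (s+1) := by
        apply hord (s+1) hs1d i hiI
        simp only [Finset.mem_Icc] at hi; omega
      have hleps : lam i ≤ ε ^ 2 := le_trans hle hls
      have heq : a i * a i = lam i * ((a i) ^ 2 / lam i) := by
        field_simp
      rw [heq]
      exact mul_le_mul_of_nonneg_right hleps (div_nonneg (sq_nonneg _) hlpos.le)
    calc ∑ i ∈ Finset.Icc (s+1) d, a i * a i
        ≤ ∑ i ∈ Finset.Icc (s+1) d, ε ^ 2 * ((a i) ^ 2 / lam i) :=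
          Finset.sum_le_sum key
      _ = ε ^ 2 * ∑ i ∈ Finset.Icc (s+1) d, (a i) ^ 2 / lam i := by
          rw [Finset.mul_sum]
      _ ≤ ε ^ 2 * 1 := by
          apply mul_le_mul_of_nonneg_left _ (sq_nonneg ε)
          refine le_trans ?_ hxE
          rw [hsplit (fun i => (a i) ^ 2 / lam i)]
          have : 0 ≤ ∑ i ∈ Finset.Icc 1 s, (a i) ^ 2 / lam i :=
            Finset.sum_nonneg fun i hi => hterm_nonneg i (hT1 hi)
          linarith
      _ = ε ^ 2 := mul_one _
  have hdot : (x - y) ⬝ᵥ (x - y)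
      = (x - xp) ⬝ᵥ (x - xp) + 2 * ((x - xp) ⬝ᵥ (xp - y)) + (xp - y) ⬝ᵥ (xp - y) := by
    have hxy : x - y = (x - xp) + (xp - y) := by abel
    rw [hxy, add_dotProduct, dotProduct_add, dotProduct_add,
      dotProduct_comm (xp - y) (x - xp)]
    ring
  have hfinal : (x - y) ⬝ᵥ (x - y) ≤ 2 * ε ^ 2 := by
    rw [hdot, hcross]
    linarith
  calc Real.sqrt ((x - y) ⬝ᵥ (x - y)) ≤ Real.sqrt (2 * ε ^ 2) :=
        Real.sqrt_le_sqrt hfinal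
    _ = Real.sqrt 2 * ε := by
        rw [Real.sqrt_mul (by norm_num : (0:ℝ) ≤ 2), Real.sqrt_sq hε.le]
end

section
/- Let μ_m > 0, α > 0, and r ≥ 1 be an integer, and suppose T_0 ≥ ((r+1)/(2 μ_m))^{1/α}. Then the function F(t) = (μ_m + 2(T_0 + t)^{−α}) t^{2/(1+r)} is nondecreasing on [1, ∞); in particular, for all 1 ≤ t ≤ t', (μ_m + 2(T_0 + t)^{−α}) t^{2/(1+r)} ≤ (μ_m + 2(T_0 + t')^{−α}) t'^{2/(1+r)}. -/
open Real Set

lemma key_bernoulli {α s : ℝ} (hα : 0 < α) (hs : 0 ≤ s) :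
    2 * α * s ≤ (1 + s) ^ (α + 1) := by
  rcases le_total α 1 with h | h
  · have hb : 1 + (α + 1) * s ≤ (1 + s) ^ (α + 1) :=
      one_add_mul_self_le_rpow_one_add (by linarith) (by linarith)
    nlinarith [sq_nonneg (1 - (α + 1) / 2 * s)]
  · have hb : 1 + ((α + 1) / 2) * s ≤ (1 + s) ^ ((α + 1) / 2) :=
      one_add_mul_self_le_rpow_one_add (by linarith) (by linarith)
    have hsq : (1 + s) ^ (α + 1) = ((1 + s) ^ ((α + 1) / 2)) ^ (2 : ℕ) := by
      rw [← Real.rpow_natCast ((1 + s) ^ ((α + 1) / 2)) 2,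
        ← Real.rpow_mul (by linarith)]
      norm_num
    have hpos : (0:ℝ) ≤ 1 + ((α + 1) / 2) * s := by positivity
    have h2 : (1 + ((α + 1) / 2) * s) ^ (2:ℕ) ≤ ((1 + s) ^ ((α + 1) / 2)) ^ (2:ℕ) :=
      pow_le_pow_left₀ hpos hb 2
    rw [hsq]
    nlinarith [sq_nonneg (1 - (α + 1) / 2 * s)]

/-- Let `μ_m > 0`, `α > 0`, and `r ≥ 1` be an integer, and suppose
`T_0 ≥ ((r+1)/(2 μ_m))^(1/α)`.  Then `F(t) = (μ_m + 2 (T_0 + t)^(−α)) t^(2/(1+r))`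
is nondecreasing on `[1, ∞)`; in particular, for all `1 ≤ t ≤ t'`,
`(μ_m + 2 (T_0 + t)^(−α)) t^(2/(1+r)) ≤ (μ_m + 2 (T_0 + t')^(−α)) t'^(2/(1+r))`. -/
theorem F_nondecreasing_of_large_T0
    (r : ℕ) (hr : 1 ≤ r) (mum α T0 : ℝ) (hmum : 0 < mum) (hα : 0 < α)
    (hT0 : (((r : ℝ) + 1) / (2 * mum)) ^ (1 / α) ≤ T0) :
    MonotoneOn (fun t : ℝ => (mum + 2 * (T0 + t) ^ (-α)) * t ^ ((2 : ℝ) / (1 + (r : ℝ))))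
      (Set.Ici (1 : ℝ)) ∧
    ∀ t t' : ℝ, 1 ≤ t → t ≤ t' →
      (mum + 2 * (T0 + t) ^ (-α)) * t ^ ((2 : ℝ) / (1 + (r : ℝ))) ≤
        (mum + 2 * (T0 + t') ^ (-α)) * t' ^ ((2 : ℝ) / (1 + (r : ℝ))) := by
  set p : ℝ := (2 : ℝ) / (1 + (r : ℝ)) with hp
  have hr1 : (1 : ℝ) ≤ (r : ℝ) := by exact_mod_cast hr
  have hrpos : (0 : ℝ) < 1 + (r : ℝ) := by linarith
  have hppos : 0 < p := by positivity
  have hbpos : (0 : ℝ) < ((r : ℝ) + 1) / (2 * mum) := by positivity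
  have hT0pos : 0 < T0 := lt_of_lt_of_le (Real.rpow_pos_of_pos hbpos _) hT0
  -- T0 ^ α ≥ (r+1)/(2 mum)
  have hT0α : ((r : ℝ) + 1) / (2 * mum) ≤ T0 ^ α := by
    have := Real.rpow_le_rpow (Real.rpow_pos_of_pos hbpos _).le hT0 hα.le
    rwa [← Real.rpow_mul hbpos.le, one_div_mul_cancel hα.ne', Real.rpow_one] at this
  have hT0αpos : 0 < T0 ^ α := Real.rpow_pos_of_pos hT0pos α
  -- T0 ^ (-α) ≤ p * mum
  have hTinv : T0 ^ (-α) ≤ p * mum := by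
    rw [Real.rpow_neg hT0pos.le]
    rw [div_le_iff₀ (by positivity)] at hT0α
    rw [inv_le_iff_one_le_mul₀ hT0αpos, hp]
    rw [div_mul_eq_mul_div, div_mul_eq_mul_div, le_div_iff₀ hrpos]
    nlinarith
  -- the key derivative bound
  have hkey : ∀ t : ℝ, 1 ≤ t → 2 * α * t * (T0 + t) ^ (-(α + 1)) ≤ T0 ^ (-α) := by
    intro t ht
    have htpos : (0 : ℝ) < t := lt_of_lt_of_le one_pos ht
    have hTt : (0 : ℝ) < T0 + t := by linarith
    have hk := key_bernoulli hα (div_nonneg htpos.le hT0pos.le) (s := t / T0)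
    have h1 : 1 + t / T0 = (T0 + t) / T0 := by field_simp
    rw [h1, Real.div_rpow hTt.le hT0pos.le] at hk
    -- hk : 2 * α * (t / T0) ≤ (T0+t)^(α+1) / T0^(α+1)
    have hTα1 : T0 ^ (α + 1) = T0 ^ α * T0 := by
      rw [Real.rpow_add hT0pos, Real.rpow_one]
    have hTtpos : 0 < (T0 + t) ^ (α + 1) := Real.rpow_pos_of_pos hTt _
    have hTα1pos : 0 < T0 ^ (α + 1) := Real.rpow_pos_of_pos hT0pos _
    rw [le_div_iff₀ hTα1pos] at hk
    have hgoal : 2 * α * t * T0 ^ α ≤ (T0 + t) ^ (α + 1) := by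
      have he : 2 * α * (t / T0) * T0 ^ (α + 1) = 2 * α * t * T0 ^ α := by
        rw [hTα1]; field_simp
      linarith [hk, he.symm.le]
    rw [Real.rpow_neg hTt.le, Real.rpow_neg hT0pos.le, ← div_eq_mul_inv, ← one_div,
      div_le_div_iff₀ hTtpos hT0αpos]
    linarith
  -- derivative of F
  have hF : ∀ t : ℝ, 1 ≤ t →
      HasDerivAt (fun t : ℝ => (mum + 2 * (T0 + t) ^ (-α)) * t ^ p)
        ((2 * (1 * (-α) * (T0 + t) ^ (-α - 1))) * t ^ p
          + (mum + 2 * (T0 + t) ^ (-α)) * (1 * p * t ^ (p - 1))) t := by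
    intro t ht
    have htpos : (0 : ℝ) < t := lt_of_lt_of_le one_pos ht
    have hTt : (0 : ℝ) < T0 + t := by linarith
    have hd1 : HasDerivAt (fun x : ℝ => (T0 + x) ^ (-α))
        (1 * (-α) * (T0 + t) ^ (-α - 1)) t :=
      ((hasDerivAt_id t).const_add T0).rpow_const (Or.inl hTt.ne')
    have hd2 : HasDerivAt (fun x : ℝ => x ^ p) (1 * p * t ^ (p - 1)) t :=
      (hasDerivAt_id t).rpow_const (Or.inl htpos.ne')
    exact ((hd1.const_mul 2).const_add mum).mul hd2
  -- derivative is nonneg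
  have hderiv : ∀ t : ℝ, 1 ≤ t →
      0 ≤ (2 * (1 * (-α) * (T0 + t) ^ (-α - 1))) * t ^ p
          + (mum + 2 * (T0 + t) ^ (-α)) * (1 * p * t ^ (p - 1)) := by
    intro t ht
    have htpos : (0 : ℝ) < t := lt_of_lt_of_le one_pos ht
    have hTt : (0 : ℝ) < T0 + t := by linarith
    have htp : t ^ p = t ^ (p - 1) * t := by
      rw [← Real.rpow_add_one htpos.ne' (p - 1)]; ring_nf
    have hq : (0 : ℝ) ≤ (T0 + t) ^ (-α) := (Real.rpow_pos_of_pos hTt _).le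
    have htp1 : (0 : ℝ) ≤ t ^ (p - 1) := (Real.rpow_pos_of_pos htpos _).le
    have hb := hkey t ht
    have hchain : 2 * α * t * (T0 + t) ^ (-(α + 1)) ≤ p * mum :=
      le_trans hb hTinv
    have hee : (-α - 1 : ℝ) = -(α + 1) := by ring
    rw [hee, htp]
    nlinarith [mul_le_mul_of_nonneg_left hchain htp1,
      mul_nonneg (mul_nonneg hq hppos.le) htp1]
  have hmono : MonotoneOn (fun t : ℝ => (mum + 2 * (T0 + t) ^ (-α)) * t ^ p)
      (Set.Ici (1 : ℝ)) := by
    apply monotoneOn_of_deriv_nonneg (convex_Ici 1)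
    · exact fun t ht => (hF t ht).continuousAt.continuousWithinAt
    · intro t ht
      rw [interior_Ici] at ht
      exact (hF t ht.le).differentiableAt.differentiableWithinAt
    · intro t ht
      rw [interior_Ici] at ht
      rw [(hF t ht.le).deriv]
      exact hderiv t ht.le
  refine ⟨hmono, fun t t' ht htt' => ?_⟩
  exact hmono ht (le_trans ht htt') htt'
end
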